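/- Every finite normal subgroup of a minimal non-sofic group is contained in the center of the group. -/

import Mathlib

/-- The normalized Hamming distance between two permutations of `Fin n`:
the number of points where they differ, divided by `n`. -/
noncomputable def permHammingDist {n : ℕ} (σ τ : Equiv.Perm (Fin n)) : ℝ :=
  ((Finset.univ.filter fun i => σ i ≠ τ i).card : ℝ) / n

/-- A group `G` is sofic if for every finite subset `F ⊆ G` and every `ε > 0` there exist
`n ≥ 1` and a map `θ` from `F` to `Sym(Fin n)` (extended to all of `G`) such that:
(i) `θ` is an `ε`-approximate homomorphism on `F`;
(ii) `θ` almost sends the identity to the identity;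
(iii) distinct elements of `F` are sent to permutations at Hamming distance at least `1/4`. -/
def IsSofic (G : Type*) [Group G] : Prop :=
  ∀ (F : Finset G) (ε : ℝ), 0 < ε →
    ∃ n : ℕ, 1 ≤ n ∧ ∃ θ : G → Equiv.Perm (Fin n),
      (∀ g h : G, g ∈ F → h ∈ F → g * h ∈ F →
        permHammingDist (θ g * θ h) (θ (g * h)) < ε) ∧
      ((1 : G) ∈ F → permHammingDist (θ 1) 1 < ε) ∧
      (∀ x y : G, x ∈ F → y ∈ F → x ≠ y → 1 / 4 ≤ permHammingDist (θ x) (θ y))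

/-- A group is minimal non-sofic if it is not sofic but every proper subgroup is sofic. -/
def IsMinimalNonSofic (G : Type*) [Group G] : Prop :=
  ¬ IsSofic G ∧ ∀ H : Subgroup G, H ≠ ⊤ → IsSofic H

open Finset

/-- Transporting a mismatch count along an equivalence. -/
lemma card_ne_permCongr {α β : Type*} [Fintype α] [Fintype β] [DecidableEq α] [DecidableEq β]
    (e : α ≃ β) (σ τ : Equiv.Perm α) :
    (Finset.univ.filter fun b => e.permCongr σ b ≠ e.permCongr τ b).card
      = (Finset.univ.filter fun a => σ a ≠ τ a).card := by
  apply Finset.card_bij (fun b _ => e.symm b)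
  · intro b hb
    simp only [Finset.mem_filter, Finset.mem_univ, true_and, Equiv.permCongr_apply] at hb ⊢
    exact fun h => (Finset.mem_filter.mp hb).2 (congrArg e h)
  · intro b₁ _ b₂ _ h
    exact e.symm.injective h
  · intro a ha
    simp only [Finset.mem_filter, Finset.mem_univ, true_and] at ha
    refine ⟨e a, ?_, e.symm_apply_apply a⟩
    simp only [Finset.mem_filter, Finset.mem_univ, true_and, Equiv.permCongr_apply,
      Equiv.symm_apply_apply]
    exact Finset.mem_filter.mpr ⟨Finset.mem_univ _, by
      rw [Equiv.symm_apply_apply]; exact fun h => ha (e.injective h)⟩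

/-- Counting over a product, block by block. -/
lemma card_filter_prod {α β : Type*} [Fintype α] [Fintype β] (P : α × β → Prop)
    [DecidablePred P] :
    (Finset.univ.filter P).card = ∑ a : α, (Finset.univ.filter fun b => P (a, b)).card := by
  classical
  rw [Finset.card_eq_sum_card_fiberwise (f := Prod.fst) (t := Finset.univ)
    (fun x _ => Finset.mem_univ _)]
  refine Finset.sum_congr rfl fun a _ => ?_
  apply Finset.card_bij (fun p _ => p.2)
  · intro p hp
    simp only [Finset.mem_filter, Finset.mem_univ, true_and] at hp ⊢
    obtain ⟨hP, hfst⟩ := hp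
    have : p = (a, p.2) := Prod.ext hfst rfl
    rwa [this] at hP
  · intro p₁ hp₁ p₂ hp₂ h
    simp only [Finset.mem_filter] at hp₁ hp₂
    exact Prod.ext (hp₁.2.trans hp₂.2.symm) h
  · intro b hb
    simp only [Finset.mem_filter, Finset.mem_univ, true_and] at hb
    exact ⟨(a, b), by simp [hb], rfl⟩

lemma permCongr_mul {α β : Type*} (e : α ≃ β) (σ τ : Equiv.Perm α) :
    e.permCongr (σ * τ) = e.permCongr σ * e.permCongr τ := by
  ext b
  simp [Equiv.permCongr_apply, Equiv.Perm.mul_apply]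

lemma permCongr_one {α β : Type*} (e : α ≃ β) :
    e.permCongr (1 : Equiv.Perm α) = 1 := by
  ext b
  simp [Equiv.permCongr_apply]

/-- If a group has a sofic subgroup of finite index, then it is sofic. -/
lemma isSofic_of_finiteIndex {G : Type*} [Group G] (H : Subgroup G) [H.FiniteIndex]
    (hH : IsSofic H) : IsSofic G := by
  classical
  intro F ε hε
  haveI : Fintype (G ⧸ H) := H.fintypeQuotientOfFiniteIndex
  set k := Fintype.card (G ⧸ H) with hk
  have hk1 : 1 ≤ k := Fintype.card_pos
  have hkR : (0 : ℝ) < k := by exact_mod_cast Nat.lt_of_lt_of_le Nat.zero_lt_one hk1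
  -- the cocycle
  have hmem : ∀ (g : G) (q : G ⧸ H), ((g • q).out⁻¹ * g * q.out) ∈ H := by
    intro g q
    have h1 : (QuotientGroup.mk ((g • q).out) : G ⧸ H) = QuotientGroup.mk (g * q.out) := by
      rw [QuotientGroup.out_eq']
      conv_lhs => rw [← QuotientGroup.out_eq' q]
      exact (MulAction.Quotient.smul_mk H g q.out).symm
    have := (QuotientGroup.eq).mp h1
    simpa [mul_assoc] using this
  set A : G → G ⧸ H → H := fun g q => ⟨(g • q).out⁻¹ * g * q.out, hmem g q⟩ with hA
  have hAmul : ∀ (g h : G) (q : G ⧸ H), A g (h • q) * A h q = A (g * h) q := by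
    intro g h q
    apply Subtype.ext
    show ((g • (h • q)).out⁻¹ * g * (h • q).out) * ((h • q).out⁻¹ * h * q.out)
        = ((g * h) • q).out⁻¹ * (g * h) * q.out
    rw [smul_smul]
    group
  have hA1 : ∀ q : G ⧸ H, A 1 q = 1 := by
    intro q
    apply Subtype.ext
    show (((1 : G) • q).out⁻¹ * 1 * q.out) = 1
    rw [one_smul, mul_one, inv_mul_cancel]
  -- the finite set in H
  set F₀ : Finset G := F ∪ {1} with hF₀
  set F'' : Finset G :=
    (F₀ ×ˢ ((Finset.univ : Finset (G ⧸ H)) ×ˢ (Finset.univ : Finset (G ⧸ H)))).image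
      (fun p => p.2.1.out⁻¹ * p.1 * p.2.2.out) with hF''
  set F' : Finset H := F''.preimage Subtype.val (Subtype.val_injective.injOn) with hF'
  have hAmem : ∀ g ∈ F₀, ∀ q : G ⧸ H, A g q ∈ F' := by
    intro g hg q
    rw [hF', Finset.mem_preimage]
    apply Finset.mem_image.mpr
    exact ⟨(g, g • q, q), by simp [Finset.mem_product, hg], rfl⟩
  have h1F' : (1 : H) ∈ F' := by
    have := hAmem 1 (by simp [hF₀]) (QuotientGroup.mk (1 : G))
    rwa [hA1] at this
  obtain ⟨n, hn, θ, hθ1, hθ2, hθ3⟩ := hH F' (ε / k) (div_pos hε hkR)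
  have hnR : (0 : ℝ) < n := by exact_mod_cast Nat.lt_of_lt_of_le Nat.zero_lt_one hn
  -- the amplified permutations
  set Θ : G → Equiv.Perm ((G ⧸ H) × Fin n) := fun g =>
    { toFun := fun p => (g • p.1, θ (A g p.1) p.2)
      invFun := fun p => (g⁻¹ • p.1, (θ (A g (g⁻¹ • p.1)))⁻¹ p.2)
      left_inv := fun p => by simp
      right_inv := fun p => by simp } with hΘ
  have hΘapp : ∀ (g : G) (p : (G ⧸ H) × Fin n), Θ g p = (g • p.1, θ (A g p.1) p.2) :=
    fun g p => rfl
  have hcard : Fintype.card ((G ⧸ H) × Fin n) = k * n := by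
    simp [hk]
  let e : ((G ⧸ H) × Fin n) ≃ Fin (k * n) := (Fintype.equivFin _).trans (finCongr hcard)
  have hknR : (0 : ℝ) < (k * n : ℕ) := by positivity
  -- global distance formula
  have hdist : ∀ σ τ : Equiv.Perm ((G ⧸ H) × Fin n),
      permHammingDist (e.permCongr σ) (e.permCongr τ)
        = (∑ q : G ⧸ H, ((Finset.univ.filter fun i => σ (q, i) ≠ τ (q, i)).card : ℝ))
            / ((k * n : ℕ) : ℝ) := by
    intro σ τ
    rw [permHammingDist, card_ne_permCongr, card_filter_prod (fun p => σ p ≠ τ p)]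
    push_cast
    ring
  refine ⟨k * n, Nat.one_le_iff_ne_zero.mpr (by positivity), fun g => e.permCongr (Θ g),
    ?_, ?_, ?_⟩
  · -- approximate homomorphism
    intro g h hg hh hgh
    rw [← permCongr_mul, hdist]
    rw [div_lt_iff₀ hknR]
    have hblock : ∀ q : G ⧸ H,
        ((Finset.univ.filter fun i => (Θ g * Θ h) (q, i) ≠ (Θ (g * h)) (q, i)).card : ℝ)
          < ε / k * n := by
      intro q
      have hx : A g (h • q) ∈ F' := hAmem g (by simp [hF₀, hg]) (h • q)
      have hy : A h q ∈ F' := hAmem h (by simp [hF₀, hh]) q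
      have hxy : A g (h • q) * A h q ∈ F' := by
        rw [hAmul]; exact hAmem (g * h) (by simp [hF₀, hgh]) q
      have hd := hθ1 _ _ hx hy hxy
      rw [permHammingDist, div_lt_iff₀ hnR] at hd
      have hset : (Finset.univ.filter fun i => (Θ g * Θ h) (q, i) ≠ (Θ (g * h)) (q, i))
          = (Finset.univ.filter fun i =>
              (θ (A g (h • q)) * θ (A h q)) i ≠ θ (A g (h • q) * A h q) i) := by
        apply Finset.filter_congr
        intro i _
        rw [hAmul]
        show (Θ g (Θ h (q, i)) ≠ Θ (g * h) (q, i)) ↔ _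
        rw [hΘapp, hΘapp, hΘapp]
        simp only [smul_smul, Prod.mk.injEq, Equiv.Perm.mul_apply, ne_eq]
        tauto
      rw [hset]
      exact hd
    calc (∑ q : G ⧸ H, ((Finset.univ.filter fun i =>
            (Θ g * Θ h) (q, i) ≠ (Θ (g * h)) (q, i)).card : ℝ))
        < ∑ _q : G ⧸ H, (ε / k * n) := Finset.sum_lt_sum_of_nonempty Finset.univ_nonempty
          (fun q _ => hblock q)
      _ = ε * (n : ℝ) := by
          rw [Finset.sum_const, Finset.card_univ, ← hk, nsmul_eq_mul,
            ← mul_assoc, mul_comm ((k : ℝ)) (ε / (k : ℝ)), div_mul_cancel₀ ε (ne_of_gt hkR)]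
      _ ≤ ε * ((k * n : ℕ) : ℝ) := by
          push_cast
          have hk1' : (1 : ℝ) ≤ (k : ℝ) := by exact_mod_cast hk1
          have hle : (n : ℝ) ≤ (k : ℝ) * (n : ℝ) := le_mul_of_one_le_left hnR.le hk1'
          exact mul_le_mul_of_nonneg_left hle hε.le
  · -- identity
    intro h1F
    rw [show (1 : Equiv.Perm (Fin (k * n))) = e.permCongr 1 from (permCongr_one e).symm, hdist,
      div_lt_iff₀ hknR]
    have hd := hθ2 h1F'
    rw [permHammingDist, div_lt_iff₀ hnR] at hd
    have hblock : ∀ q : G ⧸ H,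
        ((Finset.univ.filter fun i => (Θ 1) (q, i) ≠ (1 : Equiv.Perm ((G ⧸ H) × Fin n)) (q, i)).card : ℝ)
          < ε / k * n := by
      intro q
      have hset : (Finset.univ.filter fun i => (Θ 1) (q, i) ≠ (1 : Equiv.Perm ((G ⧸ H) × Fin n)) (q, i))
          = (Finset.univ.filter fun i => θ 1 i ≠ (1 : Equiv.Perm (Fin n)) i) := by
        apply Finset.filter_congr
        intro i _
        rw [hΘapp, hA1]
        simp [Prod.ext_iff]
      rw [hset]
      simpa using hd
    calc (∑ q : G ⧸ H, ((Finset.univ.filter fun i =>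
            (Θ 1) (q, i) ≠ (1 : Equiv.Perm ((G ⧸ H) × Fin n)) (q, i)).card : ℝ))
        < ∑ _q : G ⧸ H, (ε / k * n) := Finset.sum_lt_sum_of_nonempty Finset.univ_nonempty
          (fun q _ => hblock q)
      _ = ε * (n : ℝ) := by
          rw [Finset.sum_const, Finset.card_univ, ← hk, nsmul_eq_mul,
            ← mul_assoc, mul_comm ((k : ℝ)) (ε / (k : ℝ)), div_mul_cancel₀ ε (ne_of_gt hkR)]
      _ ≤ ε * ((k * n : ℕ) : ℝ) := by
          push_cast
          have hk1' : (1 : ℝ) ≤ (k : ℝ) := by exact_mod_cast hk1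
          have hle : (n : ℝ) ≤ (k : ℝ) * (n : ℝ) := le_mul_of_one_le_left hnR.le hk1'
          exact mul_le_mul_of_nonneg_left hle hε.le
  · -- separation
    intro x y hx hy hxy
    rw [hdist, le_div_iff₀ hknR]
    have hblock : ∀ q : G ⧸ H,
        (n : ℝ) / 4 ≤ ((Finset.univ.filter fun i => (Θ x) (q, i) ≠ (Θ y) (q, i)).card : ℝ) := by
      intro q
      by_cases hq : x • q = y • q
      · have hne : A x q ≠ A y q := by
          intro hcontra
          apply hxy
          have hval := congrArg Subtype.val hcontra
          simp only [hA] at hval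
          rw [hq] at hval
          exact mul_left_cancel (mul_right_cancel hval)
        have hd := hθ3 _ _ (hAmem x (by simp [hF₀, hx]) q) (hAmem y (by simp [hF₀, hy]) q) hne
        rw [permHammingDist, le_div_iff₀ hnR] at hd
        have hset : (Finset.univ.filter fun i => (Θ x) (q, i) ≠ (Θ y) (q, i))
            = (Finset.univ.filter fun i => θ (A x q) i ≠ θ (A y q) i) := by
          apply Finset.filter_congr
          intro i _
          rw [hΘapp, hΘapp]
          simp [Prod.ext_iff, hq]
        rw [hset]
        linarith
      · have hset : (Finset.univ.filter fun i => (Θ x) (q, i) ≠ (Θ y) (q, i))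
            = Finset.univ := by
          apply Finset.filter_true_of_mem
          intro i _
          intro hcontra
          rw [hΘapp, hΘapp] at hcontra
          exact hq (congrArg Prod.fst hcontra)
        rw [hset, Finset.card_univ, Fintype.card_fin]
        linarith
    calc (1 : ℝ) / 4 * ((k * n : ℕ) : ℝ) = ∑ _q : G ⧸ H, ((n : ℝ) / 4) := by
          rw [Finset.sum_const, Finset.card_univ]
          push_cast [← hk]
          ring
      _ ≤ ∑ q : G ⧸ H, ((Finset.univ.filter fun i =>
            (Θ x) (q, i) ≠ (Θ y) (q, i)).card : ℝ) :=
          Finset.sum_le_sum fun q _ => hblock q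

/-- Every finite normal subgroup of a minimal non-sofic group is central. -/
theorem minimalNonSofic_finite_normal_central (G : Type*) [Group G]
    (hG : IsMinimalNonSofic G) (N : Subgroup G) (hN : N.Normal) (hfin : Finite N) :
    N ≤ Subgroup.center G := by
  classical
  set C := Subgroup.centralizer (N : Set G) with hCdef
  have hfinq : Finite (G ⧸ C) := by
    let f : G → (N → N) := fun g n => ⟨g * n * g⁻¹, hN.conj_mem n.1 n.2 g⟩
    let Φ : G ⧸ C → (N → N) := Quotient.lift f (by
      intro a b hab
      have hab : a⁻¹ * b ∈ C := QuotientGroup.leftRel_apply.mp hab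
      funext n
      apply Subtype.ext
      show a * n * a⁻¹ = b * n * b⁻¹
      have hcomm : (↑n : G) * (a⁻¹ * b) = (a⁻¹ * b) * ↑n :=
        Subgroup.mem_centralizer_iff.mp hab n.1 n.2
      have := congrArg (fun x => a * x * b⁻¹) hcomm
      simpa [mul_assoc] using this)
    have hinj : Function.Injective Φ := by
      intro q1 q2
      refine QuotientGroup.induction_on q1 fun a => ?_
      refine QuotientGroup.induction_on q2 fun b => ?_
      intro heq
      have heq' : f a = f b := heq
      rw [QuotientGroup.eq]
      rw [Subgroup.mem_centralizer_iff]
      intro m hm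
      have := congrArg Subtype.val (congrFun heq' ⟨m, hm⟩)
      have h2 : a * m * a⁻¹ = b * m * b⁻¹ := this
      have := congrArg (fun x => a⁻¹ * x * b) h2
      simpa [mul_assoc] using this
    exact Finite.of_injective Φ hinj
  have hC : C = ⊤ := by
    by_contra hne
    haveI : C.FiniteIndex := Subgroup.finiteIndex_of_finite_quotient
    exact hG.1 (isSofic_of_finiteIndex C (hG.2 C hne))
  intro g hgN
  rw [Subgroup.mem_center_iff]
  intro h
  have hhC : h ∈ C := hC ▸ Subgroup.mem_top h
  exact (Subgroup.mem_centralizer_iff.mp hhC g hgN).symm
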